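/- Define R(p, l) = 2p·l·(1-p)^{l-1} + (1-p)^{2l} − 1 for real p ∈ (0,1) and real l ≥ 3. If 2/(l+2) ≤ p < 1, then the partial derivative of R with respect to p is nonpositive: ∂R/∂p = 2l(1-p)^{l-2}(1 − p·l) − 2l(1-p)^{2l-1} ≤ 0. -/

import Mathlib

open Real in
theorem dR_dp_nonpos (p l : ℝ) (hp0 : 0 < p) (hp1 : p < 1) (hl : 3 ≤ l)
    (hp : 2 / (l + 2) ≤ p) :
    HasDerivAt (fun q : ℝ => 2 * q * l * (1 - q) ^ (l - 1) + (1 - q) ^ (2 * l) - 1)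
      (2 * l * (1 - p) ^ (l - 2) * (1 - p * l) - 2 * l * (1 - p) ^ (2 * l - 1)) p ∧
    2 * l * (1 - p) ^ (l - 2) * (1 - p * l) - 2 * l * (1 - p) ^ (2 * l - 1) ≤ 0 := by
  have h1p : (0:ℝ) < 1 - p := by linarith
  have hl0 : (0:ℝ) < l := by linarith
  constructor
  · have hb : HasDerivAt (fun q : ℝ => 1 - q) (-1) p := (hasDerivAt_id p).const_sub 1
    have hg : HasDerivAt (fun q : ℝ => (1 - q) ^ (l - 1))
        (-1 * (l - 1) * (1 - p) ^ (l - 1 - 1)) p :=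
      hb.rpow_const (Or.inl h1p.ne')
    have h2 : HasDerivAt (fun q : ℝ => 2 * q * l) (2 * l) p := by
      have := ((hasDerivAt_id p).const_mul 2).mul_const l
      simpa using this
    have hmul := h2.mul hg
    have h3 : HasDerivAt (fun q : ℝ => (1 - q) ^ (2 * l))
        (-1 * (2 * l) * (1 - p) ^ (2 * l - 1)) p :=
      hb.rpow_const (Or.inl h1p.ne')
    have hsum := (hmul.add h3).sub_const 1
    refine hsum.congr_deriv ?_
    have e1 : l - 1 - 1 = l - 2 := by ring
    have e2 : (1 - p) ^ (l - 1) = (1 - p) ^ (l - 2) * (1 - p) := by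
      rw [show l - 1 = (l - 2) + 1 by ring, Real.rpow_add h1p, Real.rpow_one]
    rw [e1, e2]
    ring
  · have hpl : 1 - p * l ≤ 0 := by
      have hl2 : (0:ℝ) < l + 2 := by linarith
      have : 2 / (l + 2) * l ≤ p * l := by
        apply mul_le_mul_of_nonneg_right hp hl0.le
      have h2l : 1 ≤ 2 / (l + 2) * l := by
        rw [div_mul_eq_mul_div, le_div_iff₀ hl2]
        linarith
      linarith
    have hA : 2 * l * (1 - p) ^ (l - 2) * (1 - p * l) ≤ 0 := by
      apply mul_nonpos_of_nonneg_of_nonpos _ hpl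
      positivity
    have hB : 0 ≤ 2 * l * (1 - p) ^ (2 * l - 1) := by positivity
    linarith
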